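/- arXiv:1909.08688 — 4 statements merged into one kernel-verified Lean document; each statement's English description precedes it below -/
import Mathlib

section
/- Let X_1, X_2, ... be i.i.d. positive integer-valued random variables, W_n = X_1 + ... + X_n, and W = {W_n : n ≥ 1}. Then with probability 1 the difference set W − W = {W_i − W_j : i, j ≥ 1} equals M(Spt(X)) ∪ (−M(Spt(X))), where Spt(X) = {i ∈ ℤ_+ : P(X_1 = i) > 0} and M(S) is the additive monoid of all finite nonnegative-integer linear combinations of elements of S. -/
open MeasureTheory ProbabilityTheory Filter

lemma list_sum_eq_sum_range (l : List ℕ) :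
    l.sum = ∑ k ∈ Finset.range l.length, l.getD k 0 := by
  induction l with
  | nil => simp
  | cons a t ih =>
      rw [List.sum_cons, List.length_cons, Finset.sum_range_succ']
      simp [ih, Nat.add_comm]

/-- Almost surely, the difference set `W - W` of the weight sequence equals
`M(Spt(X)) ∪ -M(Spt(X))`, where `Spt(X)` is the support of the gap distribution and
`M(S)` is the additive monoid generated by `S`. -/
theorem random_gap_difference_set
    {Ω : Type*} [MeasurableSpace Ω] (μ : Measure Ω) [IsProbabilityMeasure μ]
    (X : ℕ → Ω → ℕ) (hmeas : ∀ i, Measurable (X i))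
    (hpos : ∀ i ω, 0 < X i ω)
    (hindep : iIndepFun X μ)
    (hident : ∀ i, IdentDistrib (X i) (X 0) μ μ)
    (W : ℕ → Ω → ℕ) (hW : ∀ n ω, W n ω = ∑ i ∈ Finset.range (n + 1), X i ω)
    (Spt : Set ℕ) (hSpt : Spt = {v : ℕ | μ {ω | X 0 ω = v} ≠ 0}) :
    ∀ᵐ ω ∂μ, ∀ z : ℤ,
      (∃ i j : ℕ, (W i ω : ℤ) - (W j ω : ℤ) = z) ↔
      (∃ x : ℕ, x ∈ AddSubmonoid.closure Spt ∧ (z = (x : ℤ) ∨ z = -(x : ℤ))) := by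
  -- the measure of a single-value event equals that for `X 0`
  have hsing : ∀ i v, μ (X i ⁻¹' {v}) = μ {ω | X 0 ω = v} := by
    intro i v
    have := (hident i).measure_mem_eq (measurableSet_singleton v)
    simpa [Set.preimage, Set.mem_singleton_iff] using this
  -- Step 1: almost surely all gaps lie in Spt
  have hae1 : ∀ᵐ ω ∂μ, ∀ i, X i ω ∈ Spt := by
    rw [ae_all_iff]
    intro i
    have hsub : {ω | ¬ X i ω ∈ Spt} ⊆ ⋃ v ∈ Sptᶜ, X i ⁻¹' {v} := by
      intro ω hω
      exact Set.mem_biUnion hω rfl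
    refine measure_mono_null hsub ?_
    refine (measure_biUnion_null_iff (Set.to_countable _)).2 ?_
    intro v hv
    rw [hSpt] at hv
    simp only [Set.mem_compl_iff, Set.mem_setOf_eq, not_not] at hv
    rw [hsing i v, hv]
  -- Step 2: a.s., every element of the closure is realized as a difference
  have hae2 : ∀ᵐ ω ∂μ, ∀ x : ℕ, x ∈ AddSubmonoid.closure Spt →
      ∃ i j : ℕ, (W i ω : ℤ) - (W j ω : ℤ) = (x : ℤ) := by
    rw [ae_all_iff]
    intro x
    by_cases hx : x ∈ AddSubmonoid.closure Spt
    swap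
    · filter_upwards with ω h; exact absurd h hx
    obtain ⟨l, hl, hlsum⟩ := AddSubmonoid.exists_list_of_mem_closure hx
    rcases Nat.eq_zero_or_pos l.length with hm0 | hm
    · -- x = 0
      have : l = [] := List.length_eq_zero_iff.mp hm0
      subst this
      filter_upwards with ω _
      exact ⟨0, 0, by simp [← hlsum]⟩
    set m := l.length with hmdef
    -- value pattern and blocks
    set v : ℕ → ℕ := fun i => l.getD (i % m) 0 with hv
    set B : ℕ → Finset ℕ := fun n => Finset.Ico ((n+1)*m) ((n+2)*m) with hB
    set E : ℕ → Set Ω := fun n => ⋂ i ∈ B n, X i ⁻¹' {v i} with hE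
    have hEm : ∀ n, MeasurableSet (E n) := by
      intro n
      exact MeasurableSet.biInter (Set.to_countable _)
        fun i _ => (hmeas i) (measurableSet_singleton _)
    -- per-block measure via independence
    have hblockprod : ∀ (S : Finset ℕ),
        μ (⋂ i ∈ S, X i ⁻¹' {v i}) = ∏ i ∈ S, μ (X i ⁻¹' {v i}) :=
      fun S => hindep.measure_inter_preimage_eq_mul S
        (sets := fun i => {v i}) (fun i _ => measurableSet_singleton _)
    have hpairs : ∀ (S : Finset ℕ), μ (⋂ n ∈ S, E n) = ∏ n ∈ S, μ (E n) := by
      intro S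
      have hdisj : ∀ n ∈ S, ∀ n' ∈ S, n ≠ n' → Disjoint (B n) (B n') := by
        intro n _ n' _ hne
        rw [Finset.disjoint_left]
        intro a ha ha'
        simp only [hB, Finset.mem_Ico] at ha ha'
        rcases Nat.lt_or_ge n n' with h | h
        · have : (n+2) ≤ n'+1 := by omega
          have := Nat.mul_le_mul_right m this
          omega
        · have hlt : n' < n := lt_of_le_of_ne h (Ne.symm hne)
          have : (n'+2) ≤ n+1 := by omega
          have := Nat.mul_le_mul_right m this
          omega
      calc μ (⋂ n ∈ S, E n) = μ (⋂ i ∈ S.biUnion B, X i ⁻¹' {v i}) := by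
            rw [Finset.set_biInter_biUnion]
        _ = ∏ i ∈ S.biUnion B, μ (X i ⁻¹' {v i}) := hblockprod _
        _ = ∏ n ∈ S, ∏ i ∈ B n, μ (X i ⁻¹' {v i}) := Finset.prod_biUnion hdisj
        _ = ∏ n ∈ S, μ (E n) := by
            refine Finset.prod_congr rfl fun n _ => ?_
            rw [hblockprod (B n)]
    -- measure of each block event
    set q : ENNReal := ∏ k ∈ Finset.range m, μ {ω | X 0 ω = l.getD k 0} with hq
    have hEn : ∀ n, μ (E n) = q := by
      intro n
      have : μ (E n) = ∏ i ∈ B n, μ (X i ⁻¹' {v i}) := hblockprod (B n)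
      rw [this, hB]
      simp only
      rw [Finset.prod_Ico_eq_prod_range]
      have hlen : (n+2)*m - (n+1)*m = m := by ring_nf; omega
      rw [hlen, hq]
      refine Finset.prod_congr rfl fun k hk => ?_
      have hkm : k < m := Finset.mem_range.mp hk
      have hmod : ((n+1)*m + k) % m = k := by
        rw [Nat.add_comm, Nat.add_mul_mod_self_right, Nat.mod_eq_of_lt hkm]
      rw [hsing, hv]
      simp [hmod]
    have hq0 : q ≠ 0 := by
      rw [hq, Finset.prod_ne_zero_iff]
      intro k hk
      have hkm : k < m := Finset.mem_range.mp hk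
      have : l.getD k 0 ∈ Spt := by
        apply hl
        rw [List.getD_eq_getElem l 0 hkm]
        exact List.getElem_mem hkm
      rw [hSpt] at this
      exact this
    -- independence of the block events
    have hindsets : iIndepSets (fun n => ({E n} : Set (Set Ω))) μ := by
      rw [iIndepSets_iff]
      intro S f hf
      have hfE : ∀ n ∈ S, f n = E n := fun n hn => hf n hn
      calc μ (⋂ n ∈ S, f n) = μ (⋂ n ∈ S, E n) := by
            congr 1
            exact Set.iInter₂_congr hfE
        _ = ∏ n ∈ S, μ (E n) := hpairs S
        _ = ∏ n ∈ S, μ (f n) := Finset.prod_congr rfl fun n hn => by rw [hfE n hn]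
    have hindepE : iIndepSet E μ := by
      rw [iIndepSet_iff_iIndep]
      exact iIndepSets.iIndep
        (m := fun n => MeasurableSpace.generateFrom ({E n} : Set (Set Ω)))
        (fun n => MeasurableSpace.generateFrom_le (by rintro s rfl; exact hEm n))
        (fun n => ({E n} : Set (Set Ω)))
        (fun n => IsPiSystem.singleton _) (fun n => rfl) hindsets
    -- Borel-Cantelli II
    have htsum : (∑' n, μ (E n)) = ⊤ := by
      rw [tsum_congr hEn]
      exact ENNReal.tsum_const_eq_top_of_ne_zero hq0
    have hlim := measure_limsup_eq_one hEm hindepE htsum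
    have haeE : ∀ᵐ ω ∂μ, ω ∈ limsup E atTop := by
      have hmeaslim : MeasurableSet (limsup E atTop) := by
        rw [limsup_eq_iInf_iSup_of_nat]
        exact MeasurableSet.iInter fun n => MeasurableSet.iUnion fun i =>
          MeasurableSet.iUnion fun _ => hEm i
      rw [ae_iff]
      have hc : {ω | ¬ ω ∈ limsup E atTop} = (limsup E atTop)ᶜ := rfl
      rw [hc, prob_compl_eq_zero_iff hmeaslim, hlim]
    filter_upwards [haeE] with ω hω _
    have : ω ∈ ⋃ n, E n := limsup_le_iSup (f := atTop) (u := E) hω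
    obtain ⟨n, hn⟩ := Set.mem_iUnion.mp this
    -- extract the block values
    have hvals : ∀ k, k < m → X ((n+1)*m + k) ω = l.getD k 0 := by
      intro k hk
      have : ω ∈ X ((n+1)*m + k) ⁻¹' {v ((n+1)*m + k)} := by
        have hmem : (n+1)*m + k ∈ B n := by
          simp only [hB, Finset.mem_Ico]
          constructor
          · omega
          · have : (n+2)*m = (n+1)*m + m := by ring
            omega
        exact Set.mem_iInter₂.mp hn _ hmem
      have hmod : ((n+1)*m + k) % m = k := by
        rw [Nat.add_comm, Nat.add_mul_mod_self_right, Nat.mod_eq_of_lt hk]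
      simpa [hv, hmod] using this
    -- the difference of the two weights at block boundaries
    refine ⟨(n+2)*m - 1, (n+1)*m - 1, ?_⟩
    have h1 : (n+2)*m - 1 + 1 = (n+2)*m := Nat.succ_pred_eq_of_pos (Nat.mul_pos (by omega) hm)
    have h2 : (n+1)*m - 1 + 1 = (n+1)*m := Nat.succ_pred_eq_of_pos (Nat.mul_pos (by omega) hm)
    have hsplit : W ((n+2)*m - 1) ω = W ((n+1)*m - 1) ω + x := by
      rw [hW, hW, h1, h2]
      have hle : (n+1)*m ≤ (n+2)*m := Nat.mul_le_mul_right m (by omega)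
      rw [← Finset.sum_range_add_sum_Ico _ hle]
      congr 1
      rw [Finset.sum_Ico_eq_sum_range]
      have hlen : (n+2)*m - (n+1)*m = m := by ring_nf; omega
      rw [hlen, ← hlsum, list_sum_eq_sum_range]
      exact Finset.sum_congr rfl fun k hk => hvals k (Finset.mem_range.mp hk)
    rw [hsplit]
    push_cast
    ring
  -- Final assembly
  filter_upwards [hae1, hae2] with ω h1 h2
  -- forward: differences of weights lie in the monoid
  have key : ∀ a b : ℕ, b ≤ a → ∃ c : ℕ, c ∈ AddSubmonoid.closure Spt ∧
      W a ω = W b ω + c := by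
    intro a b hba
    refine ⟨∑ i ∈ Finset.Ico (b+1) (a+1), X i ω, ?_, ?_⟩
    · exact AddSubmonoid.sum_mem _ fun i _ => AddSubmonoid.subset_closure (h1 i)
    · rw [hW, hW, ← Finset.sum_range_add_sum_Ico _ (Nat.succ_le_succ hba)]
  intro z
  constructor
  · rintro ⟨i, j, rfl⟩
    rcases le_total j i with h | h
    · obtain ⟨c, hc, hEq⟩ := key i j h
      exact ⟨c, hc, Or.inl (by rw [hEq]; push_cast; ring)⟩
    · obtain ⟨c, hc, hEq⟩ := key j i h
      exact ⟨c, hc, Or.inr (by rw [hEq]; push_cast; ring)⟩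
  · rintro ⟨x, hx, rfl | rfl⟩
    · exact h2 x hx
    · obtain ⟨i, j, hij⟩ := h2 x hx
      exact ⟨j, i, by omega⟩
end

section
/- Fix a natural number m and let p = 2^{−1/(m+1)}. Let X_1, X_2, ... be i.i.d. random variables with P(X_1 = 2^k) = p^k(1 − p) for all integers k ≥ 0, and let W_n = X_1 + ... + X_n. Then with probability 1 there are infinitely many positive integers that cannot be written as a sum W_{i_1} + ... + W_{i_m} of m distinct weights (indices i_1 < ... < i_m). -/
open MeasureTheory ProbabilityTheory Filter

lemma pow2_bounds (m n : ℕ) (hn : 1 ≤ n) :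
    4 * n ^ m ≤ 2 ^ (Nat.log 2 (n ^ m) + 3) ∧ 2 ^ (Nat.log 2 (n ^ m) + 3) ≤ 8 * n ^ m := by
  have h1 : n ^ m ≠ 0 := by positivity
  constructor
  · have := Nat.lt_pow_succ_log_self (by norm_num : 1 < 2) (n ^ m)
    calc 4 * n ^ m ≤ 4 * 2 ^ (Nat.log 2 (n ^ m) + 1) := by omega
    _ = 2 ^ (Nat.log 2 (n ^ m) + 3) := by ring
  · have := Nat.pow_log_le_self 2 h1
    calc 2 ^ (Nat.log 2 (n ^ m) + 3) = 8 * 2 ^ Nat.log 2 (n ^ m) := by ring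
    _ ≤ 8 * n ^ m := by omega

lemma p_facts (m : ℕ) (p : ℝ) (hp : p = (2:ℝ) ^ (-(1:ℝ)/((m:ℝ)+1))) :
    0 < p ∧ p < 1 := by
  have hm1 : (0:ℝ) < (m:ℝ) + 1 := by positivity
  constructor
  · rw [hp]; exact Real.rpow_pos_of_pos two_pos _
  · rw [hp]
    exact Real.rpow_lt_one_of_one_lt_of_neg one_lt_two
      (div_neg_of_neg_of_pos (by norm_num) (by positivity))

lemma not_summable_tail (m : ℕ) (hm : 1 ≤ m) (p : ℝ)
    (hp : p = (2:ℝ) ^ (-(1:ℝ)/((m:ℝ)+1))) :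
    ¬ Summable (fun n : ℕ => p ^ (Nat.log 2 (n ^ m) + 3) * (1 - p)) := by
  obtain ⟨hp0, hp1⟩ := p_facts m p hp
  set z : ℝ := -(1:ℝ)/((m:ℝ)+1) with hz
  have hzneg : z < 0 := by
    rw [hz]; apply div_neg_of_neg_of_pos <;> [norm_num; positivity]
  set e : ℝ := (m:ℝ) * z with he
  have he' : e = -((m:ℝ)/((m:ℝ)+1)) := by rw [he, hz]; ring
  have heneg : e < 0 :=
    mul_neg_of_pos_of_neg (by exact_mod_cast Nat.pos_of_ne_zero (by omega)) hzneg
  have hegt : -1 < e := by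
    rw [he']
    have : (m:ℝ)/((m:ℝ)+1) < 1 := by
      rw [div_lt_one (by positivity)]; linarith
    linarith
  set c2 : ℝ := (8:ℝ) ^ z with hc2
  have hc2pos : 0 < c2 := Real.rpow_pos_of_pos (by norm_num) _
  have hkey : ∀ K : ℕ, p ^ K = ((2:ℝ) ^ K) ^ z := by
    intro K
    rw [hp, ← Real.rpow_natCast ((2:ℝ) ^ z) K, ← Real.rpow_mul (by norm_num),
      mul_comm, Real.rpow_mul (by norm_num), Real.rpow_natCast]
  have hlow : ∀ n : ℕ, 1 ≤ n → c2 * (n:ℝ) ^ e ≤ p ^ (Nat.log 2 (n ^ m) + 3) := by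
    intro n hn
    have hbd := (pow2_bounds m n hn).2
    have hcast : ((2:ℝ) ^ (Nat.log 2 (n ^ m) + 3)) ≤ 8 * (n:ℝ) ^ m := by
      have := (Nat.cast_le (α := ℝ)).mpr hbd
      push_cast at this
      linarith
    have h2pos : (0:ℝ) < (2:ℝ) ^ (Nat.log 2 (n ^ m) + 3) := by positivity
    have hstep : ((8:ℝ) * (n:ℝ) ^ m) ^ z ≤ ((2:ℝ) ^ (Nat.log 2 (n ^ m) + 3)) ^ z :=
      Real.rpow_le_rpow_of_nonpos h2pos hcast hzneg.le
    have hmul : ((8:ℝ) * (n:ℝ) ^ m) ^ z = c2 * (n:ℝ) ^ e := by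
      rw [Real.mul_rpow (by norm_num) (by positivity), hc2, he,
        ← Real.rpow_natCast (n:ℝ) m, ← Real.rpow_mul (by positivity)]
    rw [hkey]
    rw [hmul] at hstep
    exact hstep
  intro hsum
  set c : ℝ := (1 - p) * c2 with hc
  have hcpos : 0 < c := by apply mul_pos; linarith; exact hc2pos
  have hsum2 : Summable (fun n : ℕ => c * (n:ℝ) ^ e) := by
    apply hsum.of_nonneg_of_le
    · intro n; positivity
    · intro n
      rcases Nat.eq_zero_or_pos n with h0 | h1
      · subst h0
        rw [Nat.cast_zero, Real.zero_rpow (by intro h; rw [h] at heneg; exact lt_irrefl _ heneg)]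
        have : (0:ℝ) ≤ p ^ (Nat.log 2 (0 ^ m) + 3) * (1 - p) := by
          apply mul_nonneg (by positivity); linarith
        simpa using this
      · have := hlow n h1
        calc c * (n:ℝ) ^ e = (c2 * (n:ℝ) ^ e) * (1 - p) := by rw [hc]; ring
        _ ≤ p ^ (Nat.log 2 (n ^ m) + 3) * (1 - p) := by
            apply mul_le_mul_of_nonneg_right this; linarith
  have hsum3 : Summable (fun n : ℕ => (n:ℝ) ^ e) := by
    have := hsum2.mul_left c⁻¹
    simpa [← mul_assoc, inv_mul_cancel₀ hcpos.ne'] using this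
  have := Real.summable_nat_rpow.mp hsum3
  linarith

lemma comb_aux (m : ℕ) (hm : 1 ≤ m) (w : ℕ → ℕ) (mono : Monotone w)
    (hfreq : ∀ N, ∃ n, N ≤ n ∧ 4 * n ^ m ≤ w n) :
    {N : ℕ | 0 < N ∧ ¬∃ F : Finset ℕ, F.card = m ∧ ∑ i ∈ F, w i = N}.Infinite := by
  by_contra hfin
  rw [Set.not_infinite] at hfin
  obtain ⟨M, hM⟩ := hfin.bddAbove
  obtain ⟨n, hn, hwn⟩ := hfreq (M + 2)
  have hnm : n ≤ n ^ m := Nat.le_self_pow (by omega) n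
  have hrep : ∀ N ∈ Finset.Ioc M (w n - 1),
      ∃ F : Finset ℕ, F.card = m ∧ ∑ i ∈ F, w i = N := by
    intro N hN
    rw [Finset.mem_Ioc] at hN
    by_contra h
    have : N ∈ {N : ℕ | 0 < N ∧ ¬∃ F : Finset ℕ, F.card = m ∧ ∑ i ∈ F, w i = N} :=
      ⟨by omega, h⟩
    exact absurd (hM this) (by omega)
  classical
  set f : ℕ → Finset ℕ := fun N =>
    if h : ∃ F : Finset ℕ, F.card = m ∧ ∑ i ∈ F, w i = N then h.choose else ∅ with hf
  have hfspec : ∀ N ∈ Finset.Ioc M (w n - 1),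
      (f N).card = m ∧ ∑ i ∈ f N, w i = N := by
    intro N hN
    have h := hrep N hN
    rw [hf]; simp only [dif_pos h]
    exact h.choose_spec
  have hmaps : ∀ N ∈ Finset.Ioc M (w n - 1),
      f N ∈ Finset.powersetCard m (Finset.range n) := by
    intro N hN
    obtain ⟨hcard, hsum⟩ := hfspec N hN
    rw [Finset.mem_powersetCard]
    refine ⟨fun i hi => ?_, hcard⟩
    rw [Finset.mem_range]
    by_contra h
    have h1 : w n ≤ w i := mono (by omega)
    have h2 : w i ≤ N := hsum ▸ Finset.single_le_sum (fun j _ => Nat.zero_le _) hi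
    rw [Finset.mem_Ioc] at hN
    omega
  have hinj : Set.InjOn f (Finset.Ioc M (w n - 1)) := by
    intro a ha b hb hab
    rw [← (hfspec a ha).2, ← (hfspec b hb).2, hab]
  have hcard := Finset.card_le_card_of_injOn f hmaps hinj
  rw [Nat.card_Ioc, Finset.card_powersetCard, Finset.card_range] at hcard
  have hch : n.choose m ≤ n ^ m := Nat.choose_le_pow n m
  omega

/-- Counterexample: if the gaps are i.i.d. with `P(X = 2^k) = p^k (1-p)` for
`p = 2^{-1/(m+1)}`, then almost surely infinitely many positive integers cannot be written
as a sum of `m` index-distinct weights. -/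
theorem heavy_tail_gaps_not_m_complete
    {Ω : Type*} [MeasurableSpace Ω] (μ : Measure Ω) [IsProbabilityMeasure μ]
    (m : ℕ) (p : ℝ) (hp : p = (2 : ℝ) ^ (-(1 : ℝ) / ((m : ℝ) + 1)))
    (X : ℕ → Ω → ℕ) (hmeas : ∀ i, Measurable (X i))
    (hindep : iIndepFun X μ)
    (hident : ∀ i, IdentDistrib (X i) (X 0) μ μ)
    (hdist : ∀ k : ℕ, μ {ω | X 0 ω = 2 ^ k} = ENNReal.ofReal (p ^ k * (1 - p)))
    (W : ℕ → Ω → ℕ) (hW : ∀ n ω, W n ω = ∑ i ∈ Finset.range (n + 1), X i ω) :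
    ∀ᵐ ω ∂μ,
      {N : ℕ | 0 < N ∧ ¬∃ F : Finset ℕ, F.card = m ∧ ∑ i ∈ F, W i ω = N}.Infinite := by
  rcases Nat.eq_zero_or_pos m with hm0 | hm
  · subst hm0
    apply ae_of_all
    intro ω
    have hset : {N : ℕ | 0 < N ∧ ¬∃ F : Finset ℕ, F.card = 0 ∧ ∑ i ∈ F, W i ω = N}
        = Set.Ioi 0 := by
      ext N
      simp only [Set.mem_setOf_eq, Set.mem_Ioi]
      constructor
      · exact fun h => h.1
      · intro h
        refine ⟨h, ?_⟩
        rintro ⟨F, hF, hsum⟩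
        rw [Finset.card_eq_zero] at hF
        subst hF
        simp at hsum
        omega
    rw [hset]
    exact Set.Ioi_infinite 0
  · obtain ⟨hp0, hp1⟩ := p_facts m p hp
    set k : ℕ → ℕ := fun n => Nat.log 2 (n ^ m) + 3 with hk
    set E : ℕ → Set Ω := fun n => X n ⁻¹' {2 ^ (k n)} with hE
    have hEmeas : ∀ n, MeasurableSet (E n) := fun n => (hmeas n) (measurableSet_singleton _)
    have hEdist : ∀ n, μ (E n) = ENNReal.ofReal (p ^ (k n) * (1 - p)) := by
      intro n
      have h1 := (hident n).measure_mem_eq (measurableSet_singleton ((2:ℕ) ^ (k n)))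
      have h2 := hdist (k n)
      calc μ (E n) = μ (X 0 ⁻¹' {2 ^ (k n)}) := h1
      _ = ENNReal.ofReal (p ^ (k n) * (1 - p)) := h2
    have hindepE : iIndepSet E μ := by
      rw [iIndepSet_iff_meas_biInter hEmeas]
      intro s
      exact hindep.meas_biInter (fun i _ => ⟨{2 ^ (k i)}, measurableSet_singleton _, rfl⟩)
    have htsum : ∑' n, μ (E n) = ⊤ := by
      by_contra h
      have hsumR := ENNReal.summable_toReal h
      have heq : (fun n => (μ (E n)).toReal) = fun n => p ^ (k n) * (1 - p) := by
        funext n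
        rw [hEdist n, ENNReal.toReal_ofReal (mul_nonneg (pow_nonneg hp0.le _) (by linarith))]
      rw [heq] at hsumR
      exact not_summable_tail m hm p hp hsumR
    have hone := measure_limsup_eq_one hEmeas hindepE htsum
    have hae : ∀ᵐ ω ∂μ, ω ∈ limsup E atTop := by
      rw [ae_iff]
      have : {ω | ¬ ω ∈ limsup E atTop} = (limsup E atTop)ᶜ := rfl
      rw [this, prob_compl_eq_zero_iff (MeasurableSet.measurableSet_limsup hEmeas)]
      exact hone
    filter_upwards [hae] with ω hω
    apply comb_aux m hm (fun n => W n ω)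
    · intro i j hij
      simp only [hW]
      exact Finset.sum_le_sum_of_subset (Finset.range_subset_range.mpr (by omega))
    · intro N
      rw [mem_limsup_iff_frequently_mem, frequently_atTop] at hω
      obtain ⟨n, hn, hmem⟩ := hω (N + 1)
      refine ⟨n, by omega, ?_⟩
      have hXn : X n ω = 2 ^ (k n) := hmem
      have hXW : X n ω ≤ W n ω := by
        rw [hW]
        exact Finset.single_le_sum (f := fun i => X i ω) (fun i _ => Nat.zero_le _)
          (Finset.self_mem_range_succ n)
      have hb := (pow2_bounds m n (by omega)).1
      calc 4 * n ^ m ≤ 2 ^ (k n) := hb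
      _ = X n ω := hXn.symm
      _ ≤ W n ω := hXW
end

section
/- Fix a natural number m, let p = 2^{−1/(m+1)}, and let X_1, X_2, ... be i.i.d. random variables with P(X_1 = 2^k) = p^k(1 − p) for all integers k ≥ 0. Then with probability 1 the event X_n > n^{m+1} occurs for infinitely many n. -/
open MeasureTheory ProbabilityTheory Filter

/-- If the gaps are i.i.d. with `P(X = 2^k) = p^k (1-p)` for `p = 2^{-1/(m+1)}`, then
almost surely the event `X_n > n^{m+1}` occurs for infinitely many `n`.  (The gaps are
indexed from `0`, so `X n` here is the `(n+1)`-st gap.) -/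
theorem heavy_tail_gaps_large_infinitely_often
    {Ω : Type*} [MeasurableSpace Ω] (μ : Measure Ω) [IsProbabilityMeasure μ]
    (m : ℕ) (p : ℝ) (hp : p = (2 : ℝ) ^ (-(1 : ℝ) / ((m : ℝ) + 1)))
    (X : ℕ → Ω → ℕ) (hmeas : ∀ i, Measurable (X i))
    (hindep : iIndepFun X μ)
    (hident : ∀ i, IdentDistrib (X i) (X 0) μ μ)
    (hdist : ∀ k : ℕ, μ {ω | X 0 ω = 2 ^ k} = ENNReal.ofReal (p ^ k * (1 - p))) :
    ∀ᵐ ω ∂μ, {n : ℕ | (n + 1) ^ (m + 1) < X n ω}.Infinite := by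
  have hm1 : (0:ℝ) < (m:ℝ) + 1 := by positivity
  have hp0 : 0 < p := hp ▸ Real.rpow_pos_of_pos two_pos _
  have hp1 : p < 1 := by
    rw [hp]
    exact Real.rpow_lt_one_of_one_lt_of_neg one_lt_two
      (div_neg_of_neg_of_pos (by norm_num) hm1)
  have hpm : p ^ (m + 1) = 1 / 2 := by
    have hne : ((m:ℝ) + 1) ≠ 0 := ne_of_gt hm1
    rw [hp, ← Real.rpow_natCast _ (m + 1), ← Real.rpow_mul (by norm_num : (0:ℝ) ≤ 2)]
    push_cast
    rw [div_mul_cancel₀ _ hne]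
    rw [Real.rpow_neg_one]
    norm_num
  -- tail bound: μ {X 0 > t} ≥ p ^ k0 whenever t < 2 ^ k0
  have tail : ∀ (t k0 : ℕ), t < 2 ^ k0 →
      ENNReal.ofReal (p ^ k0) ≤ μ {ω | t < X 0 ω} := by
    intro t k0 ht
    have hsub : (⋃ j : ℕ, {ω | X 0 ω = 2 ^ (k0 + j)}) ⊆ {ω | t < X 0 ω} := by
      intro ω hω
      obtain ⟨j, hj⟩ := Set.mem_iUnion.1 hω
      simp only [Set.mem_setOf_eq] at hj ⊢
      calc t < 2 ^ k0 := ht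
        _ ≤ 2 ^ (k0 + j) := Nat.pow_le_pow_right (by norm_num) (Nat.le_add_right _ _)
        _ = X 0 ω := hj.symm
    have hdisj : Pairwise (Function.onFun Disjoint
        fun j : ℕ => {ω | X 0 ω = 2 ^ (k0 + j)}) := by
      intro i j hij
      rw [Function.onFun, Set.disjoint_left]
      intro ω hi hj
      simp only [Set.mem_setOf_eq] at hi hj
      have : (2:ℕ) ^ (k0 + i) = 2 ^ (k0 + j) := by rw [← hi, ← hj]
      have := Nat.pow_right_injective (le_refl 2) this
      omega
    have hms : ∀ j : ℕ, MeasurableSet {ω | X 0 ω = 2 ^ (k0 + j)} := by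
      intro j
      exact (hmeas 0) (MeasurableSet.of_discrete (s := {2 ^ (k0 + j)}))
    have hsummable : Summable (fun j : ℕ => p ^ (k0 + j) * (1 - p)) := by
      have : Summable (fun j : ℕ => p ^ j) := summable_geometric_of_lt_one hp0.le hp1
      exact ((this.mul_left (p ^ k0)).mul_right (1 - p)).congr
        (fun j => by rw [pow_add, mul_assoc, mul_comm (p ^ j), ← mul_assoc, mul_assoc, mul_comm (1 - p)])
    have hsum : (∑' j : ℕ, ENNReal.ofReal (p ^ (k0 + j) * (1 - p)))
        = ENNReal.ofReal (p ^ k0) := by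
      rw [← ENNReal.ofReal_tsum_of_nonneg
        (fun j => mul_nonneg (pow_nonneg hp0.le _) (by linarith)) hsummable]
      congr 1
      have : (∑' j : ℕ, p ^ (k0 + j) * (1 - p)) = (p ^ k0 * (1 - p)) * ∑' j : ℕ, p ^ j := by
        rw [← tsum_mul_left]
        exact tsum_congr fun j => by rw [pow_add]; ring
      rw [this, tsum_geometric_of_lt_one hp0.le hp1, mul_assoc,
        mul_inv_cancel₀ (by linarith : (1:ℝ) - p ≠ 0), mul_one]
    calc ENNReal.ofReal (p ^ k0)
        = ∑' j : ℕ, μ {ω | X 0 ω = 2 ^ (k0 + j)} := by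
          rw [← hsum]; exact tsum_congr fun j => (hdist (k0 + j)).symm
      _ = μ (⋃ j : ℕ, {ω | X 0 ω = 2 ^ (k0 + j)}) := (measure_iUnion hdisj hms).symm
      _ ≤ μ {ω | t < X 0 ω} := measure_mono hsub
  -- the events
  set s : ℕ → Set Ω := fun n => {ω | (n + 1) ^ (m + 1) < X n ω} with hs_def
  have hsm : ∀ n, MeasurableSet (s n) := by
    intro n
    exact (hmeas n) (MeasurableSet.of_discrete (s := {x | (n + 1) ^ (m + 1) < x}))
  have hsindep : iIndepSet s μ := by
    rw [iIndepSet_iff_meas_biInter hsm]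
    intro t
    refine hindep.meas_biInter (fun i _ => ?_)
    exact ⟨{x | (i + 1) ^ (m + 1) < x}, MeasurableSet.of_discrete, rfl⟩
  -- lower bound on μ (s n)
  have hlb : ∀ n : ℕ, ENNReal.ofReal (1 / (2 * ((n:ℝ) + 1))) ≤ μ (s n) := by
    intro n
    set L : ℕ := Nat.log 2 (n + 1) + 1 with hL
    set k0 : ℕ := (m + 1) * L with hk0
    have hlt : (n + 1) ^ (m + 1) < 2 ^ k0 := by
      rw [hk0, mul_comm, pow_mul]
      exact Nat.pow_lt_pow_left (Nat.lt_pow_succ_log_self (by norm_num) (n + 1)) (by omega)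
    have h2L : (2:ℕ) ^ L ≤ 2 * (n + 1) := by
      rw [hL, pow_succ, mul_comm]
      exact Nat.mul_le_mul_left 2 (Nat.pow_log_le_self 2 (by omega))
    have hpk : 1 / (2 * ((n:ℝ) + 1)) ≤ p ^ k0 := by
      have : p ^ k0 = 1 / (2:ℝ) ^ L := by
        rw [hk0, pow_mul, hpm, div_pow, one_pow]
      rw [this]
      apply div_le_div_of_nonneg_left one_pos.le (by positivity)
      calc ((2:ℝ)) ^ L = ((2 ^ L : ℕ) : ℝ) := by push_cast; ring
        _ ≤ ((2 * (n + 1) : ℕ) : ℝ) := by exact_mod_cast h2L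
        _ = 2 * ((n:ℝ) + 1) := by push_cast; ring
    have heq : μ (s n) = μ {ω | (n + 1) ^ (m + 1) < X 0 ω} := by
      have : s n = X n ⁻¹' {x | (n + 1) ^ (m + 1) < x} := rfl
      rw [this, (hident n).measure_mem_eq MeasurableSet.of_discrete]
      rfl
    rw [heq]
    exact le_trans (ENNReal.ofReal_le_ofReal hpk) (tail _ _ hlt)
  -- divergence
  have htop : (∑' n : ℕ, μ (s n)) = ⊤ := by
    rw [eq_top_iff]
    calc (⊤ : ENNReal) = ∑' n : ℕ, ENNReal.ofReal (1 / (2 * ((n:ℝ) + 1))) := by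
          by_contra h
          have hne : (∑' n : ℕ, ENNReal.ofReal (1 / (2 * ((n:ℝ) + 1)))) ≠ ⊤ :=
            fun hc => h hc.symm
          have hsum1 : Summable (fun n : ℕ => 1 / (2 * ((n:ℝ) + 1))) := by
            have := ENNReal.summable_toReal hne
            refine this.congr fun n => ?_
            rw [ENNReal.toReal_ofReal (by positivity)]
          have hsum2 : Summable (fun n : ℕ => 1 / ((n:ℝ) + 1)) := by
            refine (hsum1.mul_left 2).congr fun n => ?_
            field_simp
          have hsum3 : Summable (fun n : ℕ => 1 / ((n:ℕ) : ℝ)) := by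
            refine (summable_nat_add_iff 1).1 ?_
            refine hsum2.congr fun n => ?_
            push_cast; ring
          exact Real.not_summable_one_div_natCast hsum3
      _ ≤ ∑' n : ℕ, μ (s n) := ENNReal.tsum_le_tsum hlb
  have hone : μ (limsup s atTop) = 1 :=
    ProbabilityTheory.measure_limsup_eq_one hsm hsindep htop
  have hae : ∀ᵐ ω ∂μ, ω ∈ limsup s atTop := by
    rw [ae_iff]
    have : {ω | ¬ ω ∈ limsup s atTop} = (limsup s atTop)ᶜ := rfl
    rw [this, measure_compl (MeasurableSet.measurableSet_limsup hsm) (measure_ne_top μ _), hone,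
      measure_univ, tsub_self]
  filter_upwards [hae] with ω hω
  have hfreq : ∃ᶠ n in atTop, ω ∈ s n := Filter.mem_limsup_iff_frequently_mem.1 hω
  exact Nat.frequently_atTop_iff_infinite.1 hfreq
end

section
/- Let X_1, X_2, ... be i.i.d. positive integer-valued random variables with E[X_1^{1/2}] < ∞, let W_n = X_1 + ... + X_n, and let W = {W_n : n ≥ 1}. Then for every constant C > 0, with probability 1, |W ∩ [1, m]| ≥ C·√m for all sufficiently large m. -/
open MeasureTheory ProbabilityTheory Filter

/-- Deterministic lemma: from the strong-law conclusions for all truncation levels,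
deduce that the partial sums are `o(n²)`. -/
lemma aux_sum_small (x : ℕ → ℕ) (c : ℕ → ℝ)
    (hc : Filter.Tendsto c atTop (nhds 0))
    (hsl : ∀ K : ℕ, Filter.Tendsto
      (fun n : ℕ => (∑ i ∈ Finset.range n,
        (if K ^ 2 < x i then Real.sqrt (x i) else 0)) / n) atTop (nhds (c K))) :
    ∀ ε : ℝ, 0 < ε → ∀ᶠ n : ℕ in atTop,
      (∑ i ∈ Finset.range n, (x i : ℝ)) ≤ ε * n ^ 2 := by
  intro ε hε
  set δ := Real.sqrt (ε / 2) with hδdef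
  have hδpos : 0 < δ := Real.sqrt_pos.2 (by linarith)
  -- choose K with c K < δ/2
  obtain ⟨K, hK⟩ : ∃ K, c K < δ / 2 := by
    have := (hc.eventually (eventually_lt_nhds (show (0:ℝ) < δ/2 by linarith))).exists
    exact this
  set Y : ℕ → ℝ := fun i => if K ^ 2 < x i then Real.sqrt (x i) else 0 with hY
  have hYnn : ∀ i, 0 ≤ Y i := by
    intro i
    simp only [hY]
    split
    · exact Real.sqrt_nonneg _
    · exact le_rfl
  -- eventually (∑ Y)/n < δ
  have h1 : ∀ᶠ n : ℕ in atTop, (∑ i ∈ Finset.range n, Y i) / n < δ := by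
    have := (hsl K).eventually (eventually_lt_nhds (show c K < δ by linarith))
    exact this
  have h2 : Filter.Tendsto (fun n : ℕ => (ε / 2) * n) atTop atTop :=
    Tendsto.const_mul_atTop (by linarith) tendsto_natCast_atTop_atTop
  have h3 : ∀ᶠ n : ℕ in atTop, ((K:ℝ) ^ 2) ≤ (ε / 2) * n :=
    h2.eventually_ge_atTop _
  filter_upwards [h1, h3, eventually_ge_atTop 1] with n hn1 hn3 hn4
  have hnpos : (0:ℝ) < n := by exact_mod_cast hn4
  -- ∑ Y ≤ δ n
  have hYsum : (∑ i ∈ Finset.range n, Y i) ≤ δ * n := by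
    have := (div_lt_iff₀ hnpos).1 hn1
    linarith
  -- pointwise bound x i ≤ K² + Y i ²
  have hpt : ∀ i, (x i : ℝ) ≤ (K:ℝ) ^ 2 + (Y i) ^ 2 := by
    intro i
    simp only [hY]
    split
    · rw [Real.sq_sqrt (by positivity)]
      have : (0:ℝ) ≤ (K:ℝ)^2 := sq_nonneg _
      linarith
    · rename_i h
      have h' : x i ≤ K ^ 2 := Nat.not_lt.1 h
      have : (x i : ℝ) ≤ (K:ℝ)^2 := by exact_mod_cast h'
      nlinarith
  have hsum1 : (∑ i ∈ Finset.range n, (x i : ℝ))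
      ≤ n * (K:ℝ)^2 + ∑ i ∈ Finset.range n, (Y i)^2 := by
    calc (∑ i ∈ Finset.range n, (x i : ℝ))
        ≤ ∑ i ∈ Finset.range n, ((K:ℝ)^2 + (Y i)^2) :=
          Finset.sum_le_sum fun i _ => hpt i
      _ = n * (K:ℝ)^2 + ∑ i ∈ Finset.range n, (Y i)^2 := by
          rw [Finset.sum_add_distrib, Finset.sum_const, Finset.card_range,
            nsmul_eq_mul]
  have hsq : (∑ i ∈ Finset.range n, (Y i)^2) ≤ (∑ i ∈ Finset.range n, Y i)^2 := by
    have hle : ∀ i ∈ Finset.range n, (Y i)^2 ≤ Y i * (∑ j ∈ Finset.range n, Y j) := by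
      intro i hi
      have h1 : Y i ≤ ∑ j ∈ Finset.range n, Y j :=
        Finset.single_le_sum (fun j _ => hYnn j) hi
      have := mul_le_mul_of_nonneg_left h1 (hYnn i)
      nlinarith [hYnn i]
    calc (∑ i ∈ Finset.range n, (Y i)^2)
        ≤ ∑ i ∈ Finset.range n, Y i * (∑ j ∈ Finset.range n, Y j) :=
          Finset.sum_le_sum hle
      _ = (∑ i ∈ Finset.range n, Y i)^2 := by rw [← Finset.sum_mul]; ring
  have hYsq : (∑ i ∈ Finset.range n, Y i)^2 ≤ (δ * n)^2 := by
    have h0 : 0 ≤ ∑ i ∈ Finset.range n, Y i := Finset.sum_nonneg fun i _ => hYnn i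
    nlinarith
  have hδsq : δ ^ 2 = ε / 2 := Real.sq_sqrt (by linarith)
  have hKn : n * (K:ℝ)^2 ≤ (ε/2) * n^2 := by nlinarith
  calc (∑ i ∈ Finset.range n, (x i : ℝ))
      ≤ n * (K:ℝ)^2 + (∑ i ∈ Finset.range n, Y i)^2 := by linarith
    _ ≤ (ε/2) * n^2 + (δ * n)^2 := by linarith
    _ = ε * n^2 := by rw [mul_pow, hδsq]; ring


/-- Deterministic counting lemma: if partial sums are `o(n²)`, the count of partial-sum
values in `[1, m]` eventually exceeds `C √m`. -/
lemma aux_count (x : ℕ → ℕ) (hx : ∀ i, 0 < x i)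
    (w : ℕ → ℕ) (hw : ∀ n, w n = ∑ i ∈ Finset.range (n + 1), x i)
    (C : ℝ) (hC : 0 < C)
    (h : ∀ ε : ℝ, 0 < ε → ∀ᶠ n : ℕ in atTop,
      (∑ i ∈ Finset.range n, (x i : ℝ)) ≤ ε * n ^ 2) :
    ∀ᶠ m : ℕ in atTop,
      C * Real.sqrt m ≤ ({y : ℕ | 1 ≤ y ∧ y ≤ m ∧ ∃ k : ℕ, w k = y}.ncard : ℝ) := by
  have hε : (0:ℝ) < ((C + 1) ^ 2)⁻¹ := by positivity
  obtain ⟨N, hN⟩ := (h _ hε).exists_forall_of_atTop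
  -- eventually `max N 1 ≤ C √m` and `1 ≤ m`
  have hsqrt : Filter.Tendsto (fun m : ℕ => C * Real.sqrt m) atTop atTop := by
    apply Tendsto.const_mul_atTop hC
    apply (tendsto_atTop_atTop_of_monotone (fun a b hab => Real.sqrt_le_sqrt hab)
      (fun b => ⟨b ^ 2, by rw [Real.sqrt_sq_eq_abs]; exact le_abs_self b⟩)).comp
      tendsto_natCast_atTop_atTop
  filter_upwards [hsqrt.eventually_ge_atTop ((N : ℝ) + 1), eventually_ge_atTop 1]
    with m hm1 hm2
  set n := ⌈C * Real.sqrt m⌉₊ with hn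
  have hCm0 : (0:ℝ) ≤ C * Real.sqrt m := by positivity
  have hnub : (n : ℝ) ≤ C * Real.sqrt m + 1 := le_of_lt (Nat.ceil_lt_add_one hCm0)
  have hsm1 : (1:ℝ) ≤ Real.sqrt m := by
    rw [show (1:ℝ) = Real.sqrt 1 by simp]
    exact Real.sqrt_le_sqrt (by exact_mod_cast hm2)
  have hnub2 : (n : ℝ) ≤ (C + 1) * Real.sqrt m := by nlinarith
  have hnN : N ≤ n := by
    have : (N : ℝ) ≤ (n : ℝ) := le_trans (by linarith) (Nat.le_ceil _)
    exact_mod_cast this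
  -- partial sum bound
  have hSn : (∑ i ∈ Finset.range n, (x i : ℝ)) ≤ (m : ℝ) := by
    have h1 := hN n hnN
    have h2 : ((C + 1) ^ 2)⁻¹ * (n:ℝ) ^ 2 ≤ (m : ℝ) := by
      rw [inv_mul_le_iff₀ (by positivity)]
      have h3 : ((n:ℝ))^2 ≤ ((C+1) * Real.sqrt m)^2 := by
        have : (0:ℝ) ≤ (n:ℝ) := Nat.cast_nonneg n
        nlinarith
      have h4 : (Real.sqrt m) ^ 2 = (m:ℝ) := Real.sq_sqrt (Nat.cast_nonneg m)
      nlinarith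
    linarith
  -- w is strictly monotone
  have hwmono : StrictMono w := by
    apply strictMono_nat_of_lt_succ
    intro k
    rw [hw, hw, Finset.sum_range_succ (n := k + 1)]
    have := hx (k + 1)
    omega
  -- each w k for k < n lies in the set
  have hwk : ∀ k, k < n → 1 ≤ w k ∧ w k ≤ m := by
    intro k hk
    constructor
    · rw [hw]
      have h0 : 0 < ∑ i ∈ Finset.range (k + 1), x i :=
        Finset.sum_pos (fun i _ => hx i) ⟨0, Finset.mem_range.2 (Nat.succ_pos k)⟩
      omega
    · have hsub : (∑ i ∈ Finset.range (k+1), x i) ≤ ∑ i ∈ Finset.range n, x i :=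
        Finset.sum_le_sum_of_subset (Finset.range_subset_range.2 hk)
      have hcast : ((∑ i ∈ Finset.range n, x i : ℕ) : ℝ)
          = ∑ i ∈ Finset.range n, (x i : ℝ) := by push_cast; ring
      have : ((w k : ℕ) : ℝ) ≤ (m : ℝ) := by
        rw [hw]
        calc ((∑ i ∈ Finset.range (k+1), x i : ℕ) : ℝ)
            ≤ ((∑ i ∈ Finset.range n, x i : ℕ) : ℝ) := by exact_mod_cast hsub
          _ = ∑ i ∈ Finset.range n, (x i : ℝ) := hcast
          _ ≤ (m : ℝ) := hSn
      exact_mod_cast this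
  -- counting
  set A : Set ℕ := {y : ℕ | 1 ≤ y ∧ y ≤ m ∧ ∃ k : ℕ, w k = y} with hA
  have hAfin : A.Finite := (Set.finite_Icc 1 m).subset (fun y hy => ⟨hy.1, hy.2.1⟩)
  have hsub : ↑((Finset.range n).image w) ⊆ A := by
    intro y hy
    simp only [Finset.coe_image, Set.mem_image, Finset.mem_coe, Finset.mem_range] at hy
    obtain ⟨k, hk, rfl⟩ := hy
    exact ⟨(hwk k hk).1, (hwk k hk).2, k, rfl⟩
  have hcard : ((Finset.range n).image w).card = n := by
    rw [Finset.card_image_of_injective _ hwmono.injective, Finset.card_range]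
  have hle : n ≤ A.ncard := by
    calc n = (↑((Finset.range n).image w) : Set ℕ).ncard := by
            rw [Set.ncard_coe_finset, hcard]
      _ ≤ A.ncard := Set.ncard_le_ncard hsub hAfin
  calc C * Real.sqrt m ≤ (n : ℝ) := Nat.le_ceil _
    _ ≤ (A.ncard : ℝ) := by exact_mod_cast hle

/-- If the gap distribution has finite 1/2-moment, then for every `C > 0`, almost surely
the number of weights in `[1, m]` is at least `C * √m` for all sufficiently large `m`. -/
theorem random_gap_weight_count_sqrt_lower_bound
    {Ω : Type*} [MeasurableSpace Ω] (μ : Measure Ω) [IsProbabilityMeasure μ]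
    (X : ℕ → Ω → ℕ) (hmeas : ∀ i, Measurable (X i))
    (hpos : ∀ i ω, 0 < X i ω)
    (hindep : iIndepFun X μ)
    (hident : ∀ i, IdentDistrib (X i) (X 0) μ μ)
    (hmom : Integrable (fun ω => Real.sqrt (X 0 ω)) μ)
    (W : ℕ → Ω → ℕ) (hW : ∀ n ω, W n ω = ∑ i ∈ Finset.range (n + 1), X i ω)
    (C : ℝ) (hC : 0 < C) :
    ∀ᵐ ω ∂μ, ∀ᶠ m : ℕ in atTop,
      C * Real.sqrt m ≤ ({x : ℕ | 1 ≤ x ∧ x ≤ m ∧ ∃ k : ℕ, W k ω = x}.ncard : ℝ) := by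
  classical
  set f : ℕ → ℕ → ℝ := fun K x => if K ^ 2 < x then Real.sqrt x else 0 with hf
  have hfmeas : ∀ K, Measurable (f K) := fun K => measurable_from_top
  set Y : ℕ → ℕ → Ω → ℝ := fun K i ω => f K (X i ω) with hYdef
  have hYmeas : ∀ K i, Measurable (Y K i) := fun K i => (hfmeas K).comp (hmeas i)
  have hfle : ∀ K x, ‖f K x‖ ≤ Real.sqrt x := by
    intro K x
    simp only [hf, Real.norm_eq_abs]
    split
    · rw [abs_of_nonneg (Real.sqrt_nonneg _)]
    · rw [abs_zero]; exact Real.sqrt_nonneg _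
  have hYint : ∀ K, Integrable (Y K 0) μ := by
    intro K
    apply hmom.mono (hYmeas K 0).aestronglyMeasurable
    filter_upwards with ω
    calc ‖Y K 0 ω‖ ≤ Real.sqrt (X 0 ω) := hfle K (X 0 ω)
      _ ≤ ‖Real.sqrt (X 0 ω)‖ := le_abs_self _
  set c : ℕ → ℝ := fun K => ∫ ω, Y K 0 ω ∂μ with hcdef
  have hc : Filter.Tendsto c atTop (nhds 0) := by
    have h0 : (0:ℝ) = ∫ (_ : Ω), (0:ℝ) ∂μ := by simp
    rw [hcdef, h0]
    apply MeasureTheory.tendsto_integral_of_dominated_convergence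
      (fun ω => Real.sqrt (X 0 ω))
      (fun K => (hYmeas K 0).aestronglyMeasurable) hmom
    · intro K
      filter_upwards with ω using hfle K (X 0 ω)
    · filter_upwards with ω
      apply Filter.Tendsto.congr' _ tendsto_const_nhds
      rw [Filter.EventuallyEq, eventually_atTop]
      refine ⟨X 0 ω, fun K hK => ?_⟩
      have h2 : K ≤ K ^ 2 := Nat.le_self_pow two_ne_zero K
      have : ¬ K ^ 2 < X 0 ω := by omega
      simp only [hYdef, hf, if_neg this]
  have hslK : ∀ K : ℕ, ∀ᵐ ω ∂μ, Filter.Tendsto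
      (fun n : ℕ => (∑ i ∈ Finset.range n, Y K i ω) / n) atTop (nhds (c K)) := by
    intro K
    have hind : Pairwise (Function.onFun (IndepFun · · μ) (fun i => Y K i)) :=
      fun i j hij => (hindep.indepFun hij).comp (hfmeas K) (hfmeas K)
    have hid : ∀ i, IdentDistrib (Y K i) (Y K 0) μ μ :=
      fun i => (hident i).comp (hfmeas K)
    exact strong_law_ae_real _ (hYint K) hind hid
  have hae : ∀ᵐ ω ∂μ, ∀ K : ℕ, Filter.Tendsto
      (fun n : ℕ => (∑ i ∈ Finset.range n, Y K i ω) / n) atTop (nhds (c K)) :=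
    (ae_all_iff).2 hslK
  filter_upwards [hae] with ω hω
  exact aux_count (fun i => X i ω) (fun i => hpos i ω) (fun n => W n ω)
    (fun n => hW n ω) C hC (aux_sum_small (fun i => X i ω) c hc hω)
end
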